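/- Under the m-tree Markov model with M = mP and m > λ_2^{-2}, for every j ≥ 3 the scaled martingale (λ_2^{-1}λ_j)^t Y_{t,j}, where Y_{t,j} = (mλ_j)^{-t}⟨Z_t, f_j⟩, converges to 0 almost surely and in L². -/

import Mathlib

open MeasureTheory BigOperators Matrix Filter
open scoped ENNReal NNReal

section helpers
variable {Ω : Type*} {m0 : MeasurableSpace Ω} {μ : Measure Ω}

private lemma intmul2 {f g : Ω → ℝ}
    (hf : MemLp f 2 μ) (hg : MemLp g 2 μ) : Integrable (fun ω => f ω * g ω) μ := by
  have h : Integrable (fun ω => (((f ω + g ω)^2 - f ω^2) - g ω^2) * (1/2)) μ :=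
    (((hf.add hg).integrable_sq.sub hf.integrable_sq).sub hg.integrable_sq).mul_const _
  exact h.congr (Filter.Eventually.of_forall fun ω => by ring)

private lemma memlp_mul_const {f : Ω → ℝ} (hf : MemLp f 2 μ) (c : ℝ) :
    MemLp (fun ω => f ω * c) 2 μ := by
  simpa [mul_comm] using hf.const_mul c

end helpers

private lemma ae_tendsto_of_sumbound {Ω : Type*} {m0 : MeasurableSpace Ω} {μ : Measure Ω}
    [IsProbabilityMeasure μ]
    {X : ℕ → Ω → ℝ} (hX : ∀ t, MemLp (X t) 2 μ) {c : ℕ → ℝ} (hc : Summable c)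
    (hb : ∀ t, ∫ ω, (X t ω)^2 ∂μ ≤ c t) :
    ∀ᵐ ω ∂μ, Tendsto (fun t => X t ω) atTop (nhds 0) := by
  have hint : ∀ t, Integrable (fun ω => (X t ω)^2) μ := fun t => (hX t).integrable_sq
  have hmeas : ∀ t, AEMeasurable (fun ω => ENNReal.ofReal ((X t ω)^2)) μ := fun t =>
    ENNReal.measurable_ofReal.comp_aemeasurable
      (((hX t).aestronglyMeasurable.aemeasurable).pow_const 2)
  have hcnn : ∀ t, 0 ≤ c t := fun t =>
    le_trans (integral_nonneg fun ω => sq_nonneg _) (hb t)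
  have hlt : ∫⁻ ω, ∑' t, ENNReal.ofReal ((X t ω)^2) ∂μ < ⊤ := by
    rw [lintegral_tsum hmeas]
    calc ∑' t, ∫⁻ ω, ENNReal.ofReal ((X t ω)^2) ∂μ
        ≤ ∑' t, ENNReal.ofReal (c t) := by
          refine ENNReal.tsum_le_tsum fun t => ?_
          rw [← ofReal_integral_eq_lintegral_ofReal (hint t)
            (Filter.Eventually.of_forall fun ω => sq_nonneg _)]
          exact ENNReal.ofReal_le_ofReal (hb t)
      _ < ⊤ := by
          rw [← ENNReal.ofReal_tsum_of_nonneg hcnn hc]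
          exact ENNReal.ofReal_lt_top
  have hae : ∀ᵐ ω ∂μ, (∑' t, ENNReal.ofReal ((X t ω)^2)) < ⊤ :=
    ae_lt_top' (AEMeasurable.ennreal_tsum hmeas) hlt.ne
  filter_upwards [hae] with ω hω
  have hsum : Summable (fun t => (X t ω)^2) := by
    have h1 := ENNReal.summable_toReal hω.ne
    refine h1.congr fun t => ?_
    exact ENNReal.toReal_ofReal (sq_nonneg _)
  have h2 : Tendsto (fun t => (X t ω)^2) atTop (nhds 0) := hsum.tendsto_atTop_zero
  rw [tendsto_zero_iff_abs_tendsto_zero]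
  have h4 : Tendsto (fun t => Real.sqrt ((X t ω)^2)) atTop (nhds 0) := by
    simpa using h2.sqrt
  exact h4.congr fun t => Real.sqrt_sq_eq_abs _

private lemma l2_tendsto_of_sumbound {Ω : Type*} {m0 : MeasurableSpace Ω} {μ : Measure Ω}
    {X : ℕ → Ω → ℝ} (hX : ∀ t, MemLp (X t) 2 μ) {c : ℕ → ℝ}
    (hc : Tendsto c atTop (nhds 0))
    (hb : ∀ t, ∫ ω, (X t ω)^2 ∂μ ≤ c t) :
    Tendsto (fun t => eLpNorm (X t) 2 μ) atTop (nhds 0) := by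
  have hub : ∀ t, eLpNorm (X t) 2 μ ≤ ENNReal.ofReal (Real.sqrt (c t)) := by
    intro t
    rw [(hX t).eLpNorm_eq_integral_rpow_norm two_ne_zero ENNReal.ofNat_ne_top]
    apply ENNReal.ofReal_le_ofReal
    simp only [ENNReal.toReal_ofNat, Real.rpow_two, Real.norm_eq_abs, sq_abs]
    have h1 : ((2:ℝ))⁻¹ = (1/2 : ℝ) := by norm_num
    rw [h1, ← Real.sqrt_eq_rpow]
    exact Real.sqrt_le_sqrt (hb t)
  have hupper : Tendsto (fun t => ENNReal.ofReal (Real.sqrt (c t))) atTop (nhds 0) := by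
    have : Tendsto (fun t => Real.sqrt (c t)) atTop (nhds 0) := by
      simpa [Function.comp_def] using (Real.continuous_sqrt.tendsto 0).comp hc
    simpa [Function.comp_def] using (ENNReal.continuous_ofReal.tendsto 0).comp this
  exact tendsto_of_tendsto_of_tendsto_of_le_of_le tendsto_const_nhds hupper
    (fun t => by simp) hub



private lemma alg_key (N : ℕ) (P : Matrix (Fin N) (Fin N) ℝ) (m lj : ℝ) (fj z : Fin N → ℝ)
    (heigen : ∀ i, ∑ a, P i a * fj a = lj * fj i) :
    ∑ a, ∑ b, (fj a * fj b) * ((∑ i, z i * (m * P i a)) * (∑ i, z i * (m * P i b))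
       + ∑ i, z i * (m * ((if a = b then P i a else 0) - P i a * P i b)))
    = (m * lj)^2 * (∑ k, z k * fj k)^2
      + m * ∑ i, z i * ((∑ a, P i a * fj a^2) - lj^2 * fj i^2) := by
  have hT : ∑ a, fj a * ∑ i, z i * (m * P i a) = m * lj * ∑ k, z k * fj k := by
    calc ∑ a, fj a * ∑ i, z i * (m * P i a)
        = ∑ a, ∑ i, fj a * (z i * (m * P i a)) := by
          refine Finset.sum_congr rfl fun a _ => ?_
          rw [Finset.mul_sum]
      _ = ∑ i, ∑ a, fj a * (z i * (m * P i a)) := Finset.sum_comm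
      _ = ∑ i, m * z i * ∑ a, P i a * fj a := by
          refine Finset.sum_congr rfl fun i _ => ?_
          rw [Finset.mul_sum]
          exact Finset.sum_congr rfl fun a _ => by ring
      _ = ∑ i, m * lj * (z i * fj i) := by
          refine Finset.sum_congr rfl fun i _ => ?_
          rw [heigen i]; ring
      _ = m * lj * ∑ k, z k * fj k := by
          rw [Finset.mul_sum]
  have h1 : ∑ a, ∑ b, fj a * fj b *
      ((∑ i, z i * (m * P i a)) * (∑ i, z i * (m * P i b)))
      = (m * lj)^2 * (∑ k, z k * fj k)^2 := by
    calc ∑ a, ∑ b, fj a * fj b * ((∑ i, z i * (m * P i a)) * (∑ i, z i * (m * P i b)))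
        = ∑ a, ∑ b, (fj a * ∑ i, z i * (m * P i a)) * (fj b * ∑ i, z i * (m * P i b)) := by
          exact Finset.sum_congr rfl fun a _ => Finset.sum_congr rfl fun b _ => by ring
      _ = (∑ a, fj a * ∑ i, z i * (m * P i a)) * (∑ b, fj b * ∑ i, z i * (m * P i b)) :=
          (Finset.sum_mul_sum _ _ _ _).symm
      _ = (m * lj)^2 * (∑ k, z k * fj k)^2 := by rw [hT]; ring
  have h2 : ∑ a, ∑ b, fj a * fj b *
      (∑ i, z i * (m * ((if a = b then P i a else 0) - P i a * P i b)))
      = m * ∑ i, z i * ((∑ a, P i a * fj a^2) - lj^2 * fj i^2) := by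
    calc ∑ a, ∑ b, fj a * fj b *
        (∑ i, z i * (m * ((if a = b then P i a else 0) - P i a * P i b)))
        = ∑ a, ∑ b, ∑ i, fj a * fj b *
            (z i * (m * ((if a = b then P i a else 0) - P i a * P i b))) := by
          exact Finset.sum_congr rfl fun a _ => Finset.sum_congr rfl fun b _ =>
            Finset.mul_sum _ _ _
      _ = ∑ i, ∑ a, ∑ b, fj a * fj b *
            (z i * (m * ((if a = b then P i a else 0) - P i a * P i b))) := by
          calc ∑ a, ∑ b, ∑ i, fj a * fj b *
              (z i * (m * ((if a = b then P i a else 0) - P i a * P i b)))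
              = ∑ a, ∑ i, ∑ b, fj a * fj b *
                (z i * (m * ((if a = b then P i a else 0) - P i a * P i b))) :=
              Finset.sum_congr rfl fun a _ => Finset.sum_comm
            _ = _ := Finset.sum_comm
      _ = ∑ i, z i * m * ((∑ a, P i a * fj a^2) - lj^2 * fj i^2) := by
          refine Finset.sum_congr rfl fun i _ => ?_
          have ha : ∀ a : Fin N, ∑ b, fj a * fj b *
              (z i * (m * ((if a = b then P i a else 0) - P i a * P i b)))
              = z i * m * (fj a * fj a * P i a)
                - (z i * m * (P i a * fj a)) * ∑ b, P i b * fj b := by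
            intro a
            have hb : ∀ b : Fin N, fj a * fj b *
                (z i * (m * ((if a = b then P i a else 0) - P i a * P i b)))
                = (if a = b then z i * m * (fj a * fj b * P i a) else 0)
                  - (z i * m * (P i a * fj a)) * (P i b * fj b) := by
              intro b
              by_cases h : a = b <;> simp [h] <;> ring
            rw [Finset.sum_congr rfl fun b _ => hb b, Finset.sum_sub_distrib]
            rw [Finset.sum_ite_eq Finset.univ a
              (fun b => z i * m * (fj a * fj b * P i a))]
            rw [← Finset.mul_sum]
            simp
          rw [Finset.sum_congr rfl fun a _ => ha a, Finset.sum_sub_distrib]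
          have hc : ∑ a, z i * m * (fj a * fj a * P i a)
              = z i * m * ∑ a, P i a * fj a ^ 2 := by
            rw [Finset.mul_sum]
            exact Finset.sum_congr rfl fun a _ => by ring
          have hd : ∑ a, (z i * m * (P i a * fj a)) * ∑ b, P i b * fj b
              = z i * m * (lj^2 * fj i ^2) := by
            rw [← Finset.sum_mul, heigen i]
            have : ∑ a, z i * m * (P i a * fj a) = z i * m * ∑ a, P i a * fj a := by
              rw [Finset.mul_sum]
            rw [this, heigen i]
            ring
          rw [hc, hd]; ring
      _ = m * ∑ i, z i * ((∑ a, P i a * fj a^2) - lj^2 * fj i^2) := by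
          rw [Finset.mul_sum]
          exact Finset.sum_congr rfl fun i _ => by ring
  calc ∑ a, ∑ b, (fj a * fj b) * ((∑ i, z i * (m * P i a)) * (∑ i, z i * (m * P i b))
       + ∑ i, z i * (m * ((if a = b then P i a else 0) - P i a * P i b)))
      = (∑ a, ∑ b, fj a * fj b * ((∑ i, z i * (m * P i a)) * (∑ i, z i * (m * P i b))))
        + ∑ a, ∑ b, fj a * fj b *
            (∑ i, z i * (m * ((if a = b then P i a else 0) - P i a * P i b))) := by
        simp only [mul_add, Finset.sum_add_distrib]
    _ = _ := by rw [h1, h2]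


private lemma aux_main {Ω : Type*} {m0 : MeasurableSpace Ω} (μ : Measure Ω)
    [IsProbabilityMeasure μ]
    (N : ℕ) (m : ℕ) (hm : 1 ≤ m)
    (P : Matrix (Fin N) (Fin N) ℝ)
    (hP_nonneg : ∀ i j, 0 ≤ P i j) (hP_rowsum : ∀ i, ∑ j, P i j = 1)
    (lj l2 : ℝ) (fj : Fin N → ℝ)
    (heig : P.mulVec fj = lj • fj)
    (hl2_pos : 0 < l2) (hgapj : |lj| < l2) (hcrit : (m : ℝ) * l2 ^ 2 > 1)
    (Z : ℕ → Ω → Fin N → ℝ)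
    (F : Filtration ℕ m0)
    (hL2 : ∀ t j, MemLp (fun ω => Z t ω j) 2 μ)
    (i0 : Fin N) (hZ0 : ∀ ω, Z 0 ω = fun j => if j = i0 then (1 : ℝ) else 0)
    (hmean : ∀ t j,
      μ[(fun ω => Z (t + 1) ω j) | F t] =ᵐ[μ]
        fun ω => ∑ i, Z t ω i * ((m : ℝ) * P i j))
    (hsecond : ∀ t j k,
      μ[(fun ω => Z (t + 1) ω j * Z (t + 1) ω k) | F t] =ᵐ[μ]
        fun ω => (∑ i, Z t ω i * ((m : ℝ) * P i j)) * (∑ i, Z t ω i * ((m : ℝ) * P i k))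
          + ∑ i, Z t ω i *
              ((m : ℝ) * ((if j = k then P i j else 0) - P i j * P i k))) :
      (∀ᵐ ω ∂μ, Tendsto
        (fun t : ℕ => (l2⁻¹ * lj) ^ t *
          (((m : ℝ) * lj) ^ (-(t : ℤ)) * ∑ k, Z t ω k * fj k))
        atTop (nhds 0)) ∧
      Tendsto (fun t : ℕ => eLpNorm
        (fun ω => (l2⁻¹ * lj) ^ t *
          (((m : ℝ) * lj) ^ (-(t : ℤ)) * ∑ k, Z t ω k * fj k)) 2 μ)
        atTop (nhds 0) := by
  have hm0 : (0:ℝ) < m := by exact_mod_cast Nat.lt_of_lt_of_le Nat.zero_lt_one hm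
  by_cases hlj : lj = 0
  · have hz : ∀ t : ℕ, 1 ≤ t → ∀ ω, (l2⁻¹ * lj) ^ t *
        (((m : ℝ) * lj) ^ (-(t : ℤ)) * ∑ k, Z t ω k * fj k) = 0 := by
      intro t ht ω
      rw [hlj, mul_zero, zero_pow (by omega : t ≠ 0), zero_mul]
    constructor
    · refine Filter.Eventually.of_forall fun ω => ?_
      refine Tendsto.congr' ?_
        (tendsto_const_nhds : Tendsto (fun _ : ℕ => (0:ℝ)) atTop (nhds 0))
      filter_upwards [Filter.eventually_atTop.2 ⟨1, fun t ht => ht⟩] with t ht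
      exact (hz t ht ω).symm
    · refine Tendsto.congr' ?_
        (tendsto_const_nhds : Tendsto (fun _ : ℕ => (0:ℝ≥0∞)) atTop (nhds 0))
      filter_upwards [Filter.eventually_atTop.2 ⟨1, fun t ht => ht⟩] with t ht
      have h0 : (fun ω => (l2⁻¹ * lj) ^ t *
          (((m : ℝ) * lj) ^ (-(t : ℤ)) * ∑ k, Z t ω k * fj k)) = (fun _ : Ω => (0:ℝ)) :=
        funext fun ω => hz t ht ω
      rw [h0]
      exact (eLpNorm_zero).symm
  have heigen : ∀ i, ∑ a, P i a * fj a = lj * fj i := by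
    intro i
    have h := congrFun heig i
    simpa [Matrix.mulVec, dotProduct, smul_eq_mul] using h
  have hLint : ∀ t k, Integrable (fun ω => Z t ω k) μ :=
    fun t k => (hL2 t k).integrable one_le_two
  -- mean recursion
  have hmean_int : ∀ t (a : Fin N),
      ∫ ω, Z (t+1) ω a ∂μ = ∑ i, (∫ ω, Z t ω i ∂μ) * ((m:ℝ) * P i a) := by
    intro t a
    rw [← integral_condExp (F.le t) (μ := μ) (f := fun ω => Z (t+1) ω a)]
    rw [integral_congr_ae (hmean t a)]
    rw [integral_finset_sum _ (fun i _ => (hLint t i).mul_const _)]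
    exact Finset.sum_congr rfl fun i _ => integral_mul_const _ _
  -- nonnegativity and total mass of expectations
  have hE : ∀ t, (∀ i, 0 ≤ ∫ ω, Z t ω i ∂μ) ∧ (∑ i, ∫ ω, Z t ω i ∂μ) = (m:ℝ)^t := by
    intro t; induction t with
    | zero =>
      have h0 : ∀ i : Fin N, ∫ ω, Z 0 ω i ∂μ = if i = i0 then (1:ℝ) else 0 := by
        intro i
        have h1 : (fun ω => Z 0 ω i) = fun _ : Ω => (if i = i0 then (1:ℝ) else 0) :=
          funext fun ω => by rw [hZ0 ω]
        rw [h1, integral_const]; simp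
      constructor
      · intro i; rw [h0 i]; split <;> norm_num
      · rw [Finset.sum_congr rfl fun i _ => h0 i]
        simp
    | succ t ih =>
      constructor
      · intro a; rw [hmean_int t a]
        exact Finset.sum_nonneg fun i _ =>
          mul_nonneg (ih.1 i) (mul_nonneg hm0.le (hP_nonneg i a))
      · calc ∑ a, ∫ ω, Z (t+1) ω a ∂μ
            = ∑ a, ∑ i, (∫ ω, Z t ω i ∂μ) * ((m:ℝ) * P i a) :=
            Finset.sum_congr rfl fun a _ => hmean_int t a
          _ = ∑ i, ∑ a, (∫ ω, Z t ω i ∂μ) * ((m:ℝ) * P i a) := Finset.sum_comm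
          _ = ∑ i, (∫ ω, Z t ω i ∂μ) * (m:ℝ) := by
            refine Finset.sum_congr rfl fun i _ => ?_
            rw [← Finset.mul_sum, ← Finset.mul_sum, hP_rowsum i, mul_one]
          _ = (m:ℝ)^(t+1) := by
            rw [← Finset.sum_mul, ih.2, pow_succ]
  -- L2 of sums
  have hSL2 : ∀ t, MemLp (fun ω => ∑ k, Z t ω k * fj k) 2 μ := fun t =>
    memLp_finset_sum _ (fun k _ => memlp_mul_const (hL2 t k) _)
  have hA2 : ∀ t (a : Fin N), MemLp (fun ω => ∑ i, Z t ω i * ((m:ℝ) * P i a)) 2 μ :=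
    fun t a => memLp_finset_sum _ (fun i _ => memlp_mul_const (hL2 t i) _)
  set B : ℕ → ℝ := fun t => ∫ ω, (∑ k, Z t ω k * fj k)^2 ∂μ with hB
  have hb_rec : ∀ t, B (t+1)
      = ((m:ℝ)*lj)^2 * B t
        + (m:ℝ) * ∑ i, (∫ ω, Z t ω i ∂μ) * ((∑ a, P i a * fj a^2) - lj^2 * fj i^2) := by
    intro t
    have hR : ∀ a b : Fin N, Integrable (fun ω =>
        (∑ i, Z t ω i * ((m:ℝ) * P i a)) * (∑ i, Z t ω i * ((m:ℝ) * P i b))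
        + ∑ i, Z t ω i * ((m:ℝ) * ((if a = b then P i a else 0) - P i a * P i b))) μ :=
      fun a b => (intmul2 (hA2 t a) (hA2 t b)).add
        (integrable_finset_sum _ fun i _ => (hLint t i).mul_const _)
    have h3 : ∀ a b : Fin N, ∫ ω, Z (t+1) ω a * Z (t+1) ω b ∂μ
        = ∫ ω, ((∑ i, Z t ω i * ((m:ℝ) * P i a)) * (∑ i, Z t ω i * ((m:ℝ) * P i b))
          + ∑ i, Z t ω i * ((m:ℝ) * ((if a = b then P i a else 0) - P i a * P i b))) ∂μ := by
      intro a b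
      rw [← integral_condExp (F.le t) (μ := μ) (f := fun ω => Z (t+1) ω a * Z (t+1) ω b)]
      exact integral_congr_ae (hsecond t a b)
    rw [hB]
    calc ∫ ω, (∑ k, Z (t+1) ω k * fj k)^2 ∂μ
        = ∫ ω, ∑ a, ∑ b, (fj a * fj b) * (Z (t+1) ω a * Z (t+1) ω b) ∂μ := by
          refine integral_congr_ae (Filter.Eventually.of_forall fun ω => ?_)
          dsimp only
          rw [sq, Finset.sum_mul_sum]
          exact Finset.sum_congr rfl fun a _ => Finset.sum_congr rfl fun b _ => by ring
      _ = ∑ a, ∑ b, (fj a * fj b) * ∫ ω, Z (t+1) ω a * Z (t+1) ω b ∂μ := by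
          rw [integral_finset_sum _ (fun a _ => integrable_finset_sum _ fun b _ =>
            (intmul2 (hL2 (t+1) a) (hL2 (t+1) b)).const_mul _)]
          refine Finset.sum_congr rfl fun a _ => ?_
          rw [integral_finset_sum _
            (fun b _ => (intmul2 (hL2 (t+1) a) (hL2 (t+1) b)).const_mul _)]
          exact Finset.sum_congr rfl fun b _ => integral_const_mul _ _
      _ = ∑ a, ∑ b, (fj a * fj b) * ∫ ω,
            ((∑ i, Z t ω i * ((m:ℝ) * P i a)) * (∑ i, Z t ω i * ((m:ℝ) * P i b))
            + ∑ i, Z t ω i * ((m:ℝ) * ((if a = b then P i a else 0) - P i a * P i b))) ∂μ :=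
          Finset.sum_congr rfl fun a _ => Finset.sum_congr rfl fun b _ => by rw [h3 a b]
      _ = ∫ ω, ∑ a, ∑ b, (fj a * fj b) *
            ((∑ i, Z t ω i * ((m:ℝ) * P i a)) * (∑ i, Z t ω i * ((m:ℝ) * P i b))
            + ∑ i, Z t ω i * ((m:ℝ) * ((if a = b then P i a else 0) - P i a * P i b))) ∂μ := by
          rw [integral_finset_sum _ (fun a _ => integrable_finset_sum _
            fun b _ => (hR a b).const_mul _)]
          refine Finset.sum_congr rfl fun a _ => ?_
          rw [integral_finset_sum _ (fun b _ => (hR a b).const_mul _)]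
          exact Finset.sum_congr rfl fun b _ => (integral_const_mul _ _).symm
      _ = ∫ ω, (((m:ℝ)*lj)^2 * (∑ k, Z t ω k * fj k)^2
            + (m:ℝ) * ∑ i, Z t ω i * ((∑ a, P i a * fj a^2) - lj^2 * fj i^2)) ∂μ := by
          refine integral_congr_ae (Filter.Eventually.of_forall fun ω => ?_)
          exact alg_key N P m lj fj (fun i => Z t ω i) heigen
      _ = ((m:ℝ)*lj)^2 * ∫ ω, (∑ k, Z t ω k * fj k)^2 ∂μ
            + (m:ℝ) * ∑ i, (∫ ω, Z t ω i ∂μ) * ((∑ a, P i a * fj a^2) - lj^2 * fj i^2) := by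
          rw [integral_add (((hSL2 t).integrable_sq).const_mul _)
            ((integrable_finset_sum _ fun i _ => (hLint t i).mul_const _).const_mul _),
            integral_const_mul, integral_const_mul,
            integral_finset_sum _ (fun i _ => (hLint t i).mul_const _)]
          congr 1
          congr 1
          exact Finset.sum_congr rfl fun i _ => integral_mul_const _ _
  -- bounds on B
  set g : Fin N → ℝ := fun i => (∑ a, P i a * fj a^2) - lj^2 * fj i^2 with hg
  set C : ℝ := ∑ i, |g i| with hC
  have hCnn : 0 ≤ C := Finset.sum_nonneg fun i _ => abs_nonneg _
  have hEg : ∀ t, |∑ i, (∫ ω, Z t ω i ∂μ) * g i| ≤ (m:ℝ)^t * C := by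
    intro t
    calc |∑ i, (∫ ω, Z t ω i ∂μ) * g i| ≤ ∑ i, |(∫ ω, Z t ω i ∂μ) * g i| :=
        Finset.abs_sum_le_sum_abs _ _
      _ ≤ ∑ i, (m:ℝ)^t * |g i| := by
        refine Finset.sum_le_sum fun i _ => ?_
        rw [abs_mul]
        refine mul_le_mul_of_nonneg_right ?_ (abs_nonneg _)
        rw [abs_of_nonneg ((hE t).1 i)]
        calc ∫ ω, Z t ω i ∂μ ≤ ∑ i', ∫ ω, Z t ω i' ∂μ :=
            Finset.single_le_sum (fun i' _ => (hE t).1 i') (Finset.mem_univ i)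
          _ = (m:ℝ)^t := (hE t).2
      _ = (m:ℝ)^t * C := by rw [hC, Finset.mul_sum]
  have hBnn : ∀ t, 0 ≤ B t := fun t => integral_nonneg fun ω => sq_nonneg _
  have hBrec' : ∀ t, B (t+1) ≤ ((m:ℝ)*lj)^2 * B t + C * (m:ℝ)^(t+1) := by
    intro t
    rw [hb_rec t]
    refine add_le_add_right ?_ _
    calc (m:ℝ) * ∑ i, (∫ ω, Z t ω i ∂μ) * g i
        ≤ (m:ℝ) * |∑ i, (∫ ω, Z t ω i ∂μ) * g i| :=
          mul_le_mul_of_nonneg_left (le_abs_self _) hm0.le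
      _ ≤ (m:ℝ) * ((m:ℝ)^t * C) := mul_le_mul_of_nonneg_left (hEg t) hm0.le
      _ = C * (m:ℝ)^(t+1) := by ring
  -- geometric machinery
  set c : ℝ := ((m:ℝ) * l2)^2 with hc
  have hc_pos : 0 < c := by rw [hc]; positivity
  set ρ : ℝ := max ((lj / l2)^2) (((m:ℝ) * l2^2)⁻¹) with hρ
  have hρ0 : 0 ≤ ρ := le_trans (sq_nonneg _) (le_max_left _ _)
  have hρ1 : ρ < 1 := by
    rw [hρ]
    refine max_lt ?_ ?_
    · rw [div_pow, div_lt_one (by positivity)]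
      calc lj^2 = |lj|^2 := (sq_abs _).symm
        _ < l2^2 := by
          refine pow_lt_pow_left₀ hgapj (abs_nonneg _) two_ne_zero
    · exact inv_lt_one_of_one_lt₀ hcrit
  have hρc_m : (m:ℝ) ≤ ρ * c := by
    have h1 : ((m:ℝ)*l2^2)⁻¹ * c = m := by
      rw [hc]; field_simp
    calc (m:ℝ) = ((m:ℝ)*l2^2)⁻¹ * c := h1.symm
      _ ≤ ρ * c := mul_le_mul_of_nonneg_right (le_max_right _ _) hc_pos.le
  have hAc : ((m:ℝ)*lj)^2 ≤ ρ * c := by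
    have h1 : ((m:ℝ)*lj)^2 = (lj/l2)^2 * c := by
      rw [hc]; field_simp
    calc ((m:ℝ)*lj)^2 = (lj/l2)^2 * c := h1
      _ ≤ ρ * c := mul_le_mul_of_nonneg_right (le_max_left _ _) hc_pos.le
  set D : ℝ := B 0 + C with hD
  have hCD : C ≤ D := by rw [hD]; linarith [hBnn 0]
  have hDnn : 0 ≤ D := le_trans hCnn hCD
  have hgrow : ∀ t, B t ≤ D * (t+1) * (ρ * c)^t := by
    intro t
    induction t with
    | zero => simp [hD]; linarith [hCnn]
    | succ t ih =>
      have hρc0 : 0 ≤ ρ * c := mul_nonneg hρ0 hc_pos.le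
      calc B (t+1) ≤ ((m:ℝ)*lj)^2 * B t + C * (m:ℝ)^(t+1) := hBrec' t
        _ ≤ (ρ * c) * B t + C * (m:ℝ)^(t+1) :=
          add_le_add_left (mul_le_mul_of_nonneg_right hAc (hBnn t)) _
        _ ≤ (ρ * c) * (D * (t+1) * (ρ * c)^t) + C * (ρ * c)^(t+1) := by
          refine add_le_add (mul_le_mul_of_nonneg_left ih hρc0) ?_
          refine mul_le_mul_of_nonneg_left ?_ hCnn
          exact pow_le_pow_left₀ hm0.le hρc_m (t+1)
        _ ≤ (ρ * c) * (D * (t+1) * (ρ * c)^t) + D * (ρ * c)^(t+1) :=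
          add_le_add_right (mul_le_mul_of_nonneg_right hCD (pow_nonneg hρc0 _)) _
        _ = D * ((t:ℝ)+1+1) * (ρ * c)^(t+1) := by ring
        _ = D * ((t+1:ℕ)+1) * (ρ * c)^(t+1) := by push_cast; ring
  -- the scaled process
  have hκ : ∀ t : ℕ, (l2⁻¹ * lj)^t * ((m:ℝ) * lj)^(-(t:ℤ)) = (((m:ℝ)*l2)^t)⁻¹ := by
    intro t
    rw [_root_.zpow_neg, zpow_natCast]
    rw [mul_pow, mul_pow, mul_pow, inv_pow]
    have hl2ne : l2 ≠ 0 := hl2_pos.ne'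
    have hmne : (m:ℝ) ≠ 0 := hm0.ne'
    field_simp
  have hXeq : ∀ (t : ℕ) ω, (l2⁻¹ * lj)^t * (((m:ℝ)*lj)^(-(t:ℤ)) * ∑ k, Z t ω k * fj k)
      = (((m:ℝ)*l2)^t)⁻¹ * ∑ k, Z t ω k * fj k := fun t ω => by
    rw [← mul_assoc, hκ t]
  have hXL2 : ∀ t : ℕ, MemLp (fun ω => (l2⁻¹*lj)^t *
      (((m:ℝ)*lj)^(-(t:ℤ)) * ∑ k, Z t ω k * fj k)) 2 μ := by
    intro t
    exact ((hSL2 t).const_mul _).const_mul _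
  set cs : ℕ → ℝ := fun t => D * ((t:ℝ)+1) * ρ^t with hcs
  have hbound : ∀ t : ℕ, ∫ ω, ((l2⁻¹*lj)^t *
      (((m:ℝ)*lj)^(-(t:ℤ)) * ∑ k, Z t ω k * fj k))^2 ∂μ ≤ cs t := by
    intro t
    have h1 : ∀ ω, ((l2⁻¹*lj)^t * (((m:ℝ)*lj)^(-(t:ℤ)) * ∑ k, Z t ω k * fj k))^2
        = (c^t)⁻¹ * (∑ k, Z t ω k * fj k)^2 := by
      intro ω
      rw [hXeq t ω, mul_pow, hc, inv_pow, ← pow_mul, ← pow_mul, mul_comm t 2]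
    rw [integral_congr_ae (Filter.Eventually.of_forall h1), integral_const_mul]
    have hct : (0:ℝ) < c^t := pow_pos hc_pos t
    rw [inv_mul_le_iff₀ hct]
    calc B t ≤ D * ((t:ℝ)+1) * (ρ * c)^t := by
          have := hgrow t; push_cast at this ⊢; linarith
      _ = c^t * cs t := by rw [hcs, mul_pow]; ring
  have hsum : Summable cs := by
    have h1 : Summable (fun t : ℕ => (t : ℝ) * ρ^t) := by
      simpa using summable_pow_mul_geometric_of_norm_lt_one 1
        (r := ρ) (by rwa [Real.norm_eq_abs, abs_of_nonneg hρ0])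
    have h2 : Summable (fun t : ℕ => ρ^t) := summable_geometric_of_lt_one hρ0 hρ1
    refine ((h1.add h2).mul_left D).congr fun t => ?_
    rw [hcs]; ring
  exact ⟨ae_tendsto_of_sumbound hXL2 hsum hbound,
    l2_tendsto_of_sumbound hXL2 hsum.tendsto_atTop_zero hbound⟩

/-- Under the m-tree Markov model with M = mP and m > λ₂⁻², for
every j ≥ 3 (here zero-based: j.val ≥ 2) the scaled martingale
(λ₂⁻¹λ_j)^t Y_{t,j}, with Y_{t,j} = (mλ_j)^{-t}⟨Z_t, f_j⟩, converges to 0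
almost surely and in L². -/
theorem gw_lower_eigen_martingale_vanish
    {Ω : Type*} {m0 : MeasurableSpace Ω} (μ : Measure Ω) [IsProbabilityMeasure μ]
    (N : ℕ) (hN : 2 ≤ N) (m : ℕ) (hm : 1 ≤ m)
    (P : Matrix (Fin N) (Fin N) ℝ)
    (hP_nonneg : ∀ i j, 0 ≤ P i j) (hP_rowsum : ∀ i, ∑ j, P i j = 1)
    (π : Fin N → ℝ) (hπ_pos : ∀ i, 0 < π i) (hπ_sum : ∑ i, π i = 1)
    (hrev : ∀ i j, π i * P i j = π j * P j i)
    (lam : Fin N → ℝ) (f : Fin N → Fin N → ℝ)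
    (heig : ∀ j, P.mulVec (f j) = lam j • f j)
    (horthonormal : ∀ a b, ∑ i, f a i * f b i * π i = if a = b then 1 else 0)
    (hlam1 : lam ⟨0, by omega⟩ = 1)
    (hlam2_pos : 0 < lam ⟨1, by omega⟩) (hlam2_lt1 : lam ⟨1, by omega⟩ < 1)
    (hgap : ∀ j : Fin N, 2 ≤ (j : ℕ) → |lam j| < lam ⟨1, by omega⟩)
    (hcrit : (m : ℝ) * (lam ⟨1, by omega⟩) ^ 2 > 1)
    (Z : ℕ → Ω → Fin N → ℝ)
    (F : Filtration ℕ m0)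
    (hadapted : ∀ t j, Measurable[F t] (fun ω => Z t ω j))
    (hL2 : ∀ t j, MemLp (fun ω => Z t ω j) 2 μ)
    (i0 : Fin N) (hZ0 : ∀ ω, Z 0 ω = fun j => if j = i0 then (1 : ℝ) else 0)
    (hmean : ∀ t j,
      μ[(fun ω => Z (t + 1) ω j) | F t] =ᵐ[μ]
        fun ω => ∑ i, Z t ω i * ((m : ℝ) * P i j))
    (hsecond : ∀ t j k,
      μ[(fun ω => Z (t + 1) ω j * Z (t + 1) ω k) | F t] =ᵐ[μ]
        fun ω => (∑ i, Z t ω i * ((m : ℝ) * P i j)) * (∑ i, Z t ω i * ((m : ℝ) * P i k))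
          + ∑ i, Z t ω i *
              ((m : ℝ) * ((if j = k then P i j else 0) - P i j * P i k))) :
    ∀ j : Fin N, 2 ≤ (j : ℕ) →
      (∀ᵐ ω ∂μ, Tendsto
        (fun t : ℕ => ((lam ⟨1, by omega⟩)⁻¹ * lam j) ^ t *
          (((m : ℝ) * lam j) ^ (-(t : ℤ)) * ∑ k, Z t ω k * f j k))
        atTop (nhds 0)) ∧
      Tendsto (fun t : ℕ => eLpNorm
        (fun ω => ((lam ⟨1, by omega⟩)⁻¹ * lam j) ^ t *
          (((m : ℝ) * lam j) ^ (-(t : ℤ)) * ∑ k, Z t ω k * f j k)) 2 μ)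
        atTop (nhds 0) := by
  intro j hj
  exact aux_main μ N m hm P hP_nonneg hP_rowsum (lam j) (lam ⟨1, by omega⟩) (f j)
    (heig j) hlam2_pos (hgap j hj) hcrit Z F hL2 i0 hZ0 hmean hsecond
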